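/- If P is observable (and controllable), then for any observation s_o and any x ∈ NS(s_o) with x ∉ F_P, every state x' ≠ x in the unobservable reach UR_{γ̂_leg(NS(s_o))}(x) satisfies ξ(x') < ξ(x); in particular max_{x' ∈ UR_{γ̂_leg(NS(s_o))}(x)} ξ(x') ≤ ξ(x) with strict inequality on all states reached via at least one transition. -/

import Mathlib

open scoped Classical

/-- Extended (partial) transition function on finite event sequences. -/
def runOf {X E : Type} (δ : X → E → Option X) : List E → X → Option X
  | [], x => some x
  | e :: s, x => (δ x e).bind (runOf δ s)

/-- A string consisting only of unobservable events. -/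
def UOString {E : Type} (uo : E → Prop) (s : List E) : Prop := ∀ e ∈ s, uo e

/-- Natural projection erasing unobservable events. -/
noncomputable def proj {E : Type} (uo : E → Prop) (s : List E) : List E :=
  s.filter (fun e => decide (¬ uo e))

/-- Legal control pattern: events with some strictly rank-decreasing occurrence
within the unobservable reach of `x`. -/
def gammaLeg {X E : Type} (δ : X → E → Option X) (uo : E → Prop)
    (ξ : X → ℕ) (x : X) : Set E :=
  {σ | ∃ s y z, UOString uo s ∧ runOf δ s x = some y ∧ δ y σ = some z ∧ ξ z < ξ y}

/-- Unobservable reach of `x` under control pattern `γ`. -/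
def UR {X E : Type} (δ : X → E → Option X) (uo : E → Prop)
    (γ : Set E) (x : X) : Set X :=
  {x' | ∃ u : List E, (∀ e ∈ u, uo e ∧ e ∈ γ) ∧ runOf δ u x = some x'}

/-- Membership in the next-state estimate `NS(s_o)` after observation `s_o`. -/
inductive NSmem {X E : Type} (δ : X → E → Option X) (uo : E → Prop)
    (x0 : X) : List E → X → Prop
  | init : NSmem δ uo x0 [] x0
  | step {so : List E} {x x' x'' : X} {σ : E} :
      NSmem δ uo x0 so x →
      x' ∈ UR δ uo Set.univ x →
      ¬ uo σ → δ x' σ = some x'' → NSmem δ uo x0 (so ++ [σ]) x''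

/-- Joint legal control pattern of the state estimate. -/
def gammaLegNS {X E : Type} (δ : X → E → Option X) (uo : E → Prop) (ξ : X → ℕ)
    (x0 : X) (so : List E) : Set E :=
  {σ | ∃ x, NSmem δ uo x0 so x ∧ σ ∈ gammaLeg δ uo ξ x}

/-- Permissive control pattern at state `x` and step `k`. -/
def gammaPer {X E : Type} (δ : X → E → Option X) (uo : E → Prop) (ξ : X → ℕ)
    (η : ℕ → ℝ) (x : X) (k : ℕ) : Set E :=
  {σ | ∀ s z, UOString uo s → runOf δ (s ++ [σ]) x = some z → (ξ z : ℝ) < η k}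

/-- Joint permissive control pattern of the state estimate. -/
def gammaPerNS {X E : Type} (δ : X → E → Option X) (uo : E → Prop) (ξ : X → ℕ)
    (η : ℕ → ℝ) (x0 : X) (so : List E) (k : ℕ) : Set E :=
  {σ | ∀ x, NSmem δ uo x0 so x → σ ∈ gammaPer δ uo ξ η x k}

/-- The on-line supervisor's control action after observation `so`. -/
def supAct {X E : Type} (δ : X → E → Option X) (uo : E → Prop) (ξ : X → ℕ)
    (η : ℕ → ℝ) (x0 : X) (so : List E) : Set E :=
  gammaLegNS δ uo ξ x0 so ∪ gammaPerNS δ uo ξ η x0 so so.length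

/-- `ξ̂(x)`: min over controllable successors' ranks if no uncontrollable event
is defined at `x`, else max over uncontrollable successors' ranks. -/
noncomputable def hatXi {X E : Type} (δ : X → E → Option X) (uc : E → Prop)
    (ξ : X → ℕ) (x : X) : ℕ :=
  if ∀ e, uc e → δ x e = none then
    sInf {n | ∃ e y, ¬ uc e ∧ δ x e = some y ∧ ξ y = n}
  else
    sSup {n | ∃ e y, uc e ∧ δ x e = some y ∧ ξ y = n}

/-- The update operator `up_α(r, x)`. -/
noncomputable def upA {X : Type} (α : ℕ) (F : Set X) (x : X) (r : ℕ) : ℕ :=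
  if x ∉ F ∧ r < α then r + 1 else r

/-- Observability of the product automaton w.r.t. `ξ` and the projection. -/
def Observable {X E : Type} (δ : X → E → Option X) (uo : E → Prop)
    (ξ : X → ℕ) (x0 : X) : Prop :=
  ∀ s s' : List E, ∀ σ : E,
    (runOf δ s x0).isSome → (runOf δ s' x0).isSome →
    proj uo s = proj uo s' →
    (∃ y z, runOf δ s x0 = some y ∧ δ y σ = some z ∧ ξ z < ξ y) →
    (runOf δ (s' ++ [σ]) x0).isSome →
    ∃ y z, runOf δ s' x0 = some y ∧ δ y σ = some z ∧ ξ z < ξ y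

/-- The list of states visited along a run. -/
def visited {X E : Type} (δ : X → E → Option X) : List E → X → Option (List X)
  | [], x => some [x]
  | e :: s, x => (δ x e).bind fun y => (visited δ s y).map (fun l => x :: l)

theorem runOf_append' {X E : Type} (δ : X → E → Option X) (s t : List E) (x : X) :
    runOf δ (s ++ t) x = (runOf δ s x).bind (runOf δ t) := by
  induction s generalizing x with
  | nil => simp [runOf]
  | cons e s ih =>
    simp only [List.cons_append, runOf]
    cases δ x e with
    | none => simp
    | some y => simp [ih]

theorem proj_uo_eq_nil {E : Type} (uo : E → Prop) (s : List E) (h : UOString uo s) :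
    proj uo s = [] := by
  simp only [proj, List.filter_eq_nil_iff, decide_eq_true_eq, not_not]
  exact h

theorem NSmem_reach {X E : Type} {δ : X → E → Option X} {uo : E → Prop}
    {x0 : X} {so : List E} {x : X} (h : NSmem δ uo x0 so x) :
    ∃ t, runOf δ t x0 = some x ∧ proj uo t = so := by
  induction h with
  | init => exact ⟨[], rfl, rfl⟩
  | @step so x x' x'' σ hns hur hσ hδ ih =>
    obtain ⟨t, ht, hpt⟩ := ih
    obtain ⟨u, hu, hru⟩ := hur
    refine ⟨t ++ u ++ [σ], ?_, ?_⟩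
    · rw [runOf_append', runOf_append', ht, Option.bind_some, hru, Option.bind_some]
      simp [runOf, hδ]
    · have hfilter : ∀ l : List E, proj uo l = List.filter (fun e => decide (¬ uo e)) l :=
        fun l => rfl
      simp only [proj, List.filter_append]
      rw [← hfilter, ← hfilter, ← hfilter, hpt,
        proj_uo_eq_nil uo u (fun e he => (hu e he).1)]
      simp [proj, hσ]

/-- under observability (and controllability), every state in the
unobservable reach of `x ∈ NS(s_o)` under the joint legal pattern has rank at
most `ξ(x)`, strictly less for states other than `x` itself. -/
theorem stmt8 {X E : Type} (δ : X → E → Option X) (uo : E → Prop)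
    (F : Set X) (x0 : X) (ξ : X → ℕ) (α : ℕ)
    (hctrl : ξ x0 < α)
    (hobs : Observable δ uo ξ x0)
    (so : List E)
    (hso : ∃ t : List E, (runOf δ t x0).isSome ∧ proj uo t = so) :
    ∀ x : X, NSmem δ uo x0 so x → x ∉ F →
      ∀ x' ∈ UR δ uo (gammaLegNS δ uo ξ x0 so) x,
        ξ x' ≤ ξ x ∧ (x' ≠ x → ξ x' < ξ x) := by
  intro x hx _hF x' hx'
  obtain ⟨u, hu, hru⟩ := hx'
  obtain ⟨tx, htx, hptx⟩ := NSmem_reach hx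
  -- key claim by induction on u
  have key : ∀ (u : List E), (∀ e ∈ u, uo e ∧ e ∈ gammaLegNS δ uo ξ x0 so) →
      ∀ (y : X) (ty : List E), runOf δ ty x0 = some y → proj uo ty = so →
      ∀ (x' : X), runOf δ u y = some x' →
      ξ x' ≤ ξ y ∧ (u ≠ [] → ξ x' < ξ y) := by
    intro u
    induction u with
    | nil =>
      intro _ y ty _ _ x' hr
      simp only [runOf, Option.some_inj] at hr
      subst hr
      exact ⟨le_refl _, fun h => absurd rfl h⟩
    | cons e u ih =>
      intro hu y ty hty hpty x' hr
      obtain ⟨huoe, hle⟩ := hu e List.mem_cons_self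
      simp only [runOf] at hr
      cases hz : δ y e with
      | none => rw [hz, Option.bind_none] at hr; exact nomatch hr
      | some z =>
        rw [hz] at hr
        simp only [Option.bind_some] at hr
        -- show ξ z < ξ y using observability
        obtain ⟨xt, hxt, s, w, w', hsuo, hrs, hδw, hξw⟩ := hle
        obtain ⟨tt, htt, hptt⟩ := NSmem_reach hxt
        have h1 : runOf δ (tt ++ s) x0 = some w := by
          rw [runOf_append', htt]; simpa using hrs
        have h2 : proj uo (tt ++ s) = so := by
          have hfilter : ∀ l : List E, proj uo l = List.filter (fun e => decide (¬ uo e)) l :=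
            fun l => rfl
          simp only [proj, List.filter_append]
          rw [← hfilter, ← hfilter, hptt, proj_uo_eq_nil uo s hsuo, List.append_nil]
        have h3 : runOf δ (ty ++ [e]) x0 = some z := by
          rw [runOf_append', hty]
          simp [runOf, hz]
        have hobs' := hobs (tt ++ s) ty e (by rw [h1]; rfl) (by rw [hty]; rfl)
          (by rw [h2, hpty])
          ⟨w, w', h1, hδw, hξw⟩ (by rw [h3]; rfl)
        obtain ⟨y', z', hy', hz', hlt⟩ := hobs'
        rw [hty, Option.some_inj] at hy'
        subst hy'
        rw [hz, Option.some_inj] at hz'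
        subst hz'
        have hzy : ξ z < ξ y := hlt
        have hpz : proj uo (ty ++ [e]) = so := by
          have hfilter : ∀ l : List E, proj uo l = List.filter (fun e => decide (¬ uo e)) l :=
            fun l => rfl
          simp only [proj, List.filter_append]
          rw [← hfilter, ← hfilter, hpty,
            proj_uo_eq_nil uo [e] (by intro a ha; simp at ha; subst ha; exact huoe),
            List.append_nil]
        have := ih (fun a ha => hu a (List.mem_cons_of_mem e ha)) z (ty ++ [e]) h3 hpz x' hr
        exact ⟨le_trans this.1 (le_of_lt hzy), fun _ => lt_of_le_of_lt this.1 hzy⟩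
  have hmain := key u hu x tx htx hptx x' hru
  refine ⟨hmain.1, fun hne => ?_⟩
  apply hmain.2
  intro hnil
  subst hnil
  simp only [runOf, Option.some_inj] at hru
  exact hne hru.symm
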